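/- Let d ≥ 1 and let ψ₁, …, ψ_{d²} be d² unit vectors in ℂ^d forming a SIC POVM, i.e., |⟨ψ_j, ψ_k⟩|² = 1/(d+1) for all j ≠ k. Then for every unit vector φ ∈ ℂ^d one has Σ_{j=1}^{d²} |⟨φ, ψ_j⟩|² = d and Σ_{j=1}^{d²} |⟨φ, ψ_j⟩|⁴ = 2d/(d+1). -/

import Mathlib

open scoped BigOperators

/-- The standard Hermitian inner product on `ℂ^d`, conjugate-linear in the
first argument: `⟨φ, ψ⟩ = ∑ i, conj (φ i) * ψ i`. -/
noncomputable def inp {d : ℕ} (φ ψ : Fin d → ℂ) : ℂ :=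
  ∑ i, (starRingEnd ℂ) (φ i) * ψ i

open Finset

lemma diag_sum {n : ℕ} (hn : 1 ≤ n) (v : Fin n → Fin n → ℂ) (c : ℂ)
    (h1 : ∀ j, v j j = 1) (h2 : ∀ j k, j ≠ k → v j k = c) :
    ∑ j, ∑ k, v j k = n * (1 + ((n : ℂ) - 1) * c) := by
  have hrow : ∀ j, ∑ k, v j k = 1 + ((n : ℂ) - 1) * c := by
    intro j
    rw [← Finset.sum_erase_add _ _ (mem_univ j), h1]
    have : ∑ k ∈ univ.erase j, v j k = ∑ k ∈ univ.erase j, c :=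
      Finset.sum_congr rfl fun k hk => h2 j k (Ne.symm (Finset.ne_of_mem_erase hk))
    rw [this, Finset.sum_const, Finset.card_erase_of_mem (mem_univ j), card_univ,
      Fintype.card_fin, nsmul_eq_mul]
    have : ((n - 1 : ℕ) : ℂ) = (n : ℂ) - 1 := by
      push_cast [Nat.cast_sub hn]; ring
    rw [this]; ring
  simp only [hrow, Finset.sum_const, card_univ, Fintype.card_fin, nsmul_eq_mul]

lemma all_zero' {ι : Type*} [Fintype ι] {f : ι → ℂ}
    (h : ∑ i, f i * (starRingEnd ℂ) (f i) = 0) (i : ι) : f i = 0 := by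
  have h1 : ∑ i, (Complex.normSq (f i) : ℂ) = 0 := by
    simpa [Complex.mul_conj] using h
  have h2 : ∑ i, Complex.normSq (f i) = 0 := by exact_mod_cast h1
  have h3 := (Finset.sum_eq_zero_iff_of_nonneg
    (fun i _ => Complex.normSq_nonneg (f i))).mp h2 i (mem_univ i)
  exact Complex.normSq_eq_zero.mp h3

lemma exchange' {ι κ : Type*} [Fintype ι] [Fintype κ] (f g : κ → ι → ℂ) :
    ∑ a : ι, (∑ j : κ, f j a) * (∑ k : κ, g k a)
      = ∑ j : κ, ∑ k : κ, ∑ a : ι, f j a * g k a := by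
  simp only [Finset.sum_mul_sum]
  rw [Finset.sum_comm]
  refine Finset.sum_congr rfl fun j _ => ?_
  rw [Finset.sum_comm]

lemma prod_sum_split {α β : Type*} [Fintype α] [Fintype β] (f : α → ℂ) (g : β → ℂ) :
    ∑ p : α × β, f p.1 * g p.2 = (∑ a, f a) * (∑ b, g b) := by
  rw [Fintype.sum_prod_type, Finset.sum_mul_sum]

-- the SIC moment sums
lemma Q1gen (d : ℕ) (hd : 1 ≤ d) (ψ : Fin (d ^ 2) → (Fin d → ℂ))
    (hψ : ∀ j, inp (ψ j) (ψ j) = 1)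
    (hSIC : ∀ j k, j ≠ k → ‖inp (ψ j) (ψ k)‖ ^ 2 = 1 / (d + 1)) :
    (∀ j k, inp (ψ j) (ψ k) * (starRingEnd ℂ) (inp (ψ j) (ψ k))
      = if j = k then 1 else ((d:ℂ)+1)⁻¹) := by
  intro j k
  by_cases h : j = k
  · subst h; simp [hψ j]
  · have h1 := hSIC j k h
    rw [if_neg h, Complex.mul_conj]
    rw [← Complex.sq_norm] at *
    rw [h1]
    push_cast
    rw [one_div]

lemma frame_op (d : ℕ) (hd : 1 ≤ d) (ψ : Fin (d ^ 2) → (Fin d → ℂ))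
    (hψ : ∀ j, inp (ψ j) (ψ j) = 1)
    (hSIC : ∀ j k, j ≠ k → ‖inp (ψ j) (ψ k)‖ ^ 2 = 1 / (d + 1)) :
    ∀ a b : Fin d, (∑ j, ψ j a * (starRingEnd ℂ) (ψ j b)) = if a = b then (d:ℂ) else 0 := by
  have hd1 : ((d:ℂ) + 1) ≠ 0 := by
    have : ((d:ℝ) + 1) ≠ 0 := by positivity
    exact_mod_cast this
  have hn : 1 ≤ d ^ 2 := Nat.one_le_pow _ _ hd
  have hv := Q1gen d hd ψ hψ hSIC
  have Q1 : ∑ j, ∑ k, inp (ψ j) (ψ k) * (starRingEnd ℂ) (inp (ψ j) (ψ k)) = (d:ℂ)^3 := by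
    rw [diag_sum hn _ (((d:ℂ)+1)⁻¹) (fun j => by simp [hv]) (fun j k hjk => by
      rw [hv j k]; simp [hjk])]
    push_cast
    field_simp
    ring
  set S : Fin d × Fin d → ℂ := fun p => ∑ j, ψ j p.1 * (starRingEnd ℂ) (ψ j p.2) with hSdef
  have hconjS : ∀ p : Fin d × Fin d, (starRingEnd ℂ) (S p)
      = ∑ k, (starRingEnd ℂ) (ψ k p.1) * ψ k p.2 := by
    intro p; simp [hSdef, map_sum, map_mul]
  have hA : ∑ p : Fin d × Fin d, S p * (starRingEnd ℂ) (S p) = (d:ℂ)^3 := by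
    calc ∑ p : Fin d × Fin d, S p * (starRingEnd ℂ) (S p)
        = ∑ p : Fin d × Fin d, (∑ j, ψ j p.1 * (starRingEnd ℂ) (ψ j p.2))
            * (∑ k, (starRingEnd ℂ) (ψ k p.1) * ψ k p.2) := by
          refine Finset.sum_congr rfl fun p _ => ?_; rw [hconjS]
      _ = ∑ j, ∑ k, ∑ p : Fin d × Fin d,
            (ψ j p.1 * (starRingEnd ℂ) (ψ j p.2)) * ((starRingEnd ℂ) (ψ k p.1) * ψ k p.2) :=
          exchange' _ _
      _ = ∑ j, ∑ k, inp (ψ j) (ψ k) * (starRingEnd ℂ) (inp (ψ j) (ψ k)) := by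
          refine Finset.sum_congr rfl fun j _ => Finset.sum_congr rfl fun k _ => ?_
          have : ∀ p : Fin d × Fin d,
              (ψ j p.1 * (starRingEnd ℂ) (ψ j p.2)) * ((starRingEnd ℂ) (ψ k p.1) * ψ k p.2)
              = (ψ j p.1 * (starRingEnd ℂ) (ψ k p.1)) * ((starRingEnd ℂ) (ψ j p.2) * ψ k p.2) := by
            intro p; ring
          rw [Finset.sum_congr rfl fun p _ => this p,
            prod_sum_split (fun a => ψ j a * (starRingEnd ℂ) (ψ k a))
              (fun b => (starRingEnd ℂ) (ψ j b) * ψ k b)]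
          have e1 : (∑ a, ψ j a * (starRingEnd ℂ) (ψ k a)) = (starRingEnd ℂ) (inp (ψ j) (ψ k)) := by
            simp [inp, map_sum, map_mul, mul_comm]
          have e2 : (∑ b, (starRingEnd ℂ) (ψ j b) * ψ k b) = inp (ψ j) (ψ k) := by
            simp [inp]
          rw [e1, e2]; ring
      _ = (d:ℂ)^3 := Q1
  have hdiagS : ∑ a, S (a, a) = (d:ℂ)^2 := by
    have : ∀ a, S (a, a) = ∑ j, ψ j a * (starRingEnd ℂ) (ψ j a) := fun a => rfl
    rw [Finset.sum_congr rfl fun a _ => this a, Finset.sum_comm]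
    have : ∀ j, ∑ a, ψ j a * (starRingEnd ℂ) (ψ j a) = 1 := by
      intro j
      have := hψ j
      rw [inp] at this
      rw [← this]
      exact Finset.sum_congr rfl fun a _ => by ring
    simp [this, Finset.sum_const, card_univ]
  set F : Fin d × Fin d → ℂ := fun p => S p - (if p.1 = p.2 then (d:ℂ) else 0) with hFdef
  have key : ∑ p : Fin d × Fin d, F p * (starRingEnd ℂ) (F p) = 0 := by
    have expand : ∀ p : Fin d × Fin d, F p * (starRingEnd ℂ) (F p) =
        S p * (starRingEnd ℂ) (S p)
        - (if p.1 = p.2 then (d:ℂ) * (S p + (starRingEnd ℂ) (S p)) else 0)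
        + (if p.1 = p.2 then (d:ℂ)^2 else 0) := by
      intro p
      by_cases h : p.1 = p.2
      · simp only [hFdef, h, if_pos, map_sub, map_mul]
        have : (starRingEnd ℂ) ((d:ℂ)) = (d:ℂ) := Complex.conj_natCast d
        rw [this]; ring
      · simp [hFdef, h]
    rw [Finset.sum_congr rfl fun p _ => expand p, Finset.sum_add_distrib, Finset.sum_sub_distrib]
    have t2 : ∑ p : Fin d × Fin d, (if p.1 = p.2 then (d:ℂ) * (S p + (starRingEnd ℂ) (S p)) else 0)
        = 2 * (d:ℂ)^3 := by
      rw [Fintype.sum_prod_type]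
      simp only [Finset.sum_ite_eq, Finset.sum_ite_eq', mem_univ, if_pos]
      have hc : ∑ a, (starRingEnd ℂ) (S (a, a)) = (d:ℂ)^2 := by
        rw [← map_sum, hdiagS]; simp
      rw [Finset.sum_congr rfl (fun a _ => mul_add (d:ℂ) (S (a,a)) _), Finset.sum_add_distrib,
        ← Finset.mul_sum, ← Finset.mul_sum, hdiagS, hc]
      ring
    have t3 : ∑ p : Fin d × Fin d, (if p.1 = p.2 then (d:ℂ)^2 else 0) = (d:ℂ)^3 := by
      rw [Fintype.sum_prod_type]
      simp only [Finset.sum_ite_eq, Finset.sum_ite_eq', mem_univ, if_pos, Finset.sum_const,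
        card_univ, Fintype.card_fin, nsmul_eq_mul]
      ring
    rw [hA, t2, t3]; ring
  intro a b
  have := all_zero' key (a, b)
  simp only [hFdef, sub_eq_zero] at this
  exact this

lemma moment2 (d : ℕ) (hd : 1 ≤ d) (ψ : Fin (d ^ 2) → (Fin d → ℂ))
    (hψ : ∀ j, inp (ψ j) (ψ j) = 1)
    (hSIC : ∀ j k, j ≠ k → ‖inp (ψ j) (ψ k)‖ ^ 2 = 1 / (d + 1))
    (φ : Fin d → ℂ) (hφ : inp φ φ = 1) :
    ∑ j, inp φ (ψ j) * (starRingEnd ℂ) (inp φ (ψ j)) = (d : ℂ) := by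
  have hS := frame_op d hd ψ hψ hSIC
  have e1 : ∀ j, inp φ (ψ j) * (starRingEnd ℂ) (inp φ (ψ j))
      = ∑ p : Fin d × Fin d,
        ((starRingEnd ℂ) (φ p.1) * ψ j p.1) * (φ p.2 * (starRingEnd ℂ) (ψ j p.2)) := by
    intro j
    rw [prod_sum_split (fun a => (starRingEnd ℂ) (φ a) * ψ j a)
      (fun b => φ b * (starRingEnd ℂ) (ψ j b))]
    congr 1
    simp [inp, map_sum, map_mul]
  rw [Finset.sum_congr rfl fun j _ => e1 j, Finset.sum_comm]
  have e2 : ∀ p : Fin d × Fin d,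
      (∑ j, ((starRingEnd ℂ) (φ p.1) * ψ j p.1) * (φ p.2 * (starRingEnd ℂ) (ψ j p.2)))
      = (starRingEnd ℂ) (φ p.1) * φ p.2 * (if p.1 = p.2 then (d:ℂ) else 0) := by
    intro p
    rw [← hS p.1 p.2, Finset.mul_sum]
    exact Finset.sum_congr rfl fun j _ => by ring
  rw [Finset.sum_congr rfl fun p _ => e2 p, Fintype.sum_prod_type]
  simp only [mul_ite, mul_zero, Finset.sum_ite_eq, Finset.sum_ite_eq', mem_univ, if_pos]
  rw [← Finset.sum_mul]
  have : (∑ a, (starRingEnd ℂ) (φ a) * φ a) = 1 := hφ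
  rw [this, one_mul]

-- delta combination lemmas
lemma delta_pair {d : ℕ} (x y : Fin d × Fin d) :
    (if x.1 = y.1 then (1:ℂ) else 0) * (if x.2 = y.2 then 1 else 0)
    = if x = y then 1 else 0 := by
  by_cases h1 : x.1 = y.1 <;> by_cases h2 : x.2 = y.2 <;>
    simp [Prod.ext_iff, h1, h2]

lemma delta_swap {d : ℕ} (x y : Fin d × Fin d) :
    (if x.1 = y.2 then (1:ℂ) else 0) * (if x.2 = y.1 then 1 else 0)
    = if (x.2, x.1) = y then 1 else 0 := by
  have he : ((x.2, x.1) = y) ↔ (x.1 = y.2 ∧ x.2 = y.1) := by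
    rw [Prod.ext_iff]; exact and_comm
  simp only [he]
  by_cases h1 : x.1 = y.2 <;> by_cases h2 : x.2 = y.1 <;> simp [h1, h2]

lemma tensor_op (d : ℕ) (hd : 1 ≤ d) (ψ : Fin (d ^ 2) → (Fin d → ℂ))
    (hψ : ∀ j, inp (ψ j) (ψ j) = 1)
    (hSIC : ∀ j k, j ≠ k → ‖inp (ψ j) (ψ k)‖ ^ 2 = 1 / (d + 1)) :
    ∀ q : (Fin d × Fin d) × (Fin d × Fin d),
      (∑ j, (ψ j q.1.1 * ψ j q.1.2) * ((starRingEnd ℂ) (ψ j q.2.1) * (starRingEnd ℂ) (ψ j q.2.2)))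
      = ((d:ℂ)/(d+1)) * ((if q.1.1 = q.2.1 then (1:ℂ) else 0) * (if q.1.2 = q.2.2 then 1 else 0)
          + (if q.1.1 = q.2.2 then 1 else 0) * (if q.1.2 = q.2.1 then 1 else 0)) := by
  have hd1 : ((d:ℂ) + 1) ≠ 0 := by
    have : ((d:ℝ) + 1) ≠ 0 := by positivity
    exact_mod_cast this
  have hn : 1 ≤ d ^ 2 := Nat.one_le_pow _ _ hd
  have hv := Q1gen d hd ψ hψ hSIC
  -- norm fact
  have nrm : ∀ j, (∑ a, ψ j a * (starRingEnd ℂ) (ψ j a)) = 1 := by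
    intro j
    have := hψ j
    rw [inp] at this
    rw [← this]
    exact Finset.sum_congr rfl fun a _ => by ring
  set c : ℂ := (d:ℂ)/(d+1) with hc
  set T : (Fin d × Fin d) × (Fin d × Fin d) → ℂ := fun q =>
    ∑ j, (ψ j q.1.1 * ψ j q.1.2) * ((starRingEnd ℂ) (ψ j q.2.1) * (starRingEnd ℂ) (ψ j q.2.2))
    with hT
  set P : (Fin d × Fin d) × (Fin d × Fin d) → ℂ := fun q =>
    (if q.1.1 = q.2.1 then (1:ℂ) else 0) * (if q.1.2 = q.2.2 then 1 else 0)
      + (if q.1.1 = q.2.2 then 1 else 0) * (if q.1.2 = q.2.1 then 1 else 0) with hP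
  -- conj of T
  have hconjT : ∀ q, (starRingEnd ℂ) (T q)
      = ∑ k, ((starRingEnd ℂ) (ψ k q.1.1) * (starRingEnd ℂ) (ψ k q.1.2)) * (ψ k q.2.1 * ψ k q.2.2) := by
    intro q; simp [hT, map_sum, map_mul]
  -- conj of P
  have hconjP : ∀ q, (starRingEnd ℂ) (P q) = P q := by
    intro q
    simp only [hP, map_add, map_mul, apply_ite (starRingEnd ℂ), map_one, map_zero]
  have hconjc : (starRingEnd ℂ) c = c := by
    simp [hc, map_div₀]
  -- Q2 : fourth moment of Gram entries
  have Q2 : ∑ j, ∑ k,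
      (inp (ψ j) (ψ k) * (starRingEnd ℂ) (inp (ψ j) (ψ k)))^2 = 2*(d:ℂ)^3/((d:ℂ)+1) := by
    rw [diag_sum hn _ ((((d:ℂ)+1)⁻¹)^2) (fun j => by rw [hv]; simp)
      (fun j k hjk => by rw [hv j k]; simp [hjk])]
    push_cast
    field_simp
    ring
  -- A2 : sum of |T|^2
  have hA2 : ∑ q : (Fin d × Fin d) × (Fin d × Fin d), T q * (starRingEnd ℂ) (T q)
      = 2*(d:ℂ)^3/((d:ℂ)+1) := by
    calc ∑ q : (Fin d × Fin d) × (Fin d × Fin d), T q * (starRingEnd ℂ) (T q)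
        = ∑ q : (Fin d × Fin d) × (Fin d × Fin d),
            (∑ j, (ψ j q.1.1 * ψ j q.1.2) * ((starRingEnd ℂ) (ψ j q.2.1) * (starRingEnd ℂ) (ψ j q.2.2)))
            * (∑ k, ((starRingEnd ℂ) (ψ k q.1.1) * (starRingEnd ℂ) (ψ k q.1.2)) * (ψ k q.2.1 * ψ k q.2.2)) := by
          refine Finset.sum_congr rfl fun q _ => ?_; rw [hconjT]
      _ = ∑ j, ∑ k, ∑ q : (Fin d × Fin d) × (Fin d × Fin d),
            ((ψ j q.1.1 * ψ j q.1.2) * ((starRingEnd ℂ) (ψ j q.2.1) * (starRingEnd ℂ) (ψ j q.2.2)))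
            * (((starRingEnd ℂ) (ψ k q.1.1) * (starRingEnd ℂ) (ψ k q.1.2)) * (ψ k q.2.1 * ψ k q.2.2)) :=
          exchange' _ _
      _ = ∑ j, ∑ k, (inp (ψ j) (ψ k) * (starRingEnd ℂ) (inp (ψ j) (ψ k)))^2 := by
          refine Finset.sum_congr rfl fun j _ => Finset.sum_congr rfl fun k _ => ?_
          have step : ∀ q : (Fin d × Fin d) × (Fin d × Fin d),
              ((ψ j q.1.1 * ψ j q.1.2) * ((starRingEnd ℂ) (ψ j q.2.1) * (starRingEnd ℂ) (ψ j q.2.2)))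
              * (((starRingEnd ℂ) (ψ k q.1.1) * (starRingEnd ℂ) (ψ k q.1.2)) * (ψ k q.2.1 * ψ k q.2.2))
              = ((ψ j q.1.1 * (starRingEnd ℂ) (ψ k q.1.1)) * (ψ j q.1.2 * (starRingEnd ℂ) (ψ k q.1.2)))
                * (((starRingEnd ℂ) (ψ j q.2.1) * ψ k q.2.1) * ((starRingEnd ℂ) (ψ j q.2.2) * ψ k q.2.2)) := by
            intro q; ring
          rw [Finset.sum_congr rfl fun q _ => step q,
            prod_sum_split
              (fun p : Fin d × Fin d => (ψ j p.1 * (starRingEnd ℂ) (ψ k p.1)) * (ψ j p.2 * (starRingEnd ℂ) (ψ k p.2)))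
              (fun p : Fin d × Fin d => ((starRingEnd ℂ) (ψ j p.1) * ψ k p.1) * ((starRingEnd ℂ) (ψ j p.2) * ψ k p.2)),
            prod_sum_split (fun a => ψ j a * (starRingEnd ℂ) (ψ k a)) (fun b => ψ j b * (starRingEnd ℂ) (ψ k b)),
            prod_sum_split (fun a => (starRingEnd ℂ) (ψ j a) * ψ k a) (fun b => (starRingEnd ℂ) (ψ j b) * ψ k b)]
          have e1 : (∑ a, ψ j a * (starRingEnd ℂ) (ψ k a)) = (starRingEnd ℂ) (inp (ψ j) (ψ k)) := by
            simp [inp, map_sum, map_mul, mul_comm]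
          have e2 : (∑ b, (starRingEnd ℂ) (ψ j b) * ψ k b) = inp (ψ j) (ψ k) := by
            simp [inp]
          rw [e1, e2]; ring
      _ = 2*(d:ℂ)^3/((d:ℂ)+1) := Q2
  -- diagonal contractions of T
  have hdiag1 : ∑ x : Fin d × Fin d, T (x, x) = (d:ℂ)^2 := by
    have e : ∀ x : Fin d × Fin d, T (x, x)
        = ∑ j, (ψ j x.1 * (starRingEnd ℂ) (ψ j x.1)) * (ψ j x.2 * (starRingEnd ℂ) (ψ j x.2)) := by
      intro x; simp only [hT]; exact Finset.sum_congr rfl fun j _ => by ring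
    rw [Finset.sum_congr rfl fun x _ => e x, Finset.sum_comm]
    have : ∀ j, ∑ x : Fin d × Fin d,
        (ψ j x.1 * (starRingEnd ℂ) (ψ j x.1)) * (ψ j x.2 * (starRingEnd ℂ) (ψ j x.2)) = 1 := by
      intro j
      rw [prod_sum_split (fun a => ψ j a * (starRingEnd ℂ) (ψ j a))
        (fun b => ψ j b * (starRingEnd ℂ) (ψ j b)), nrm, one_mul]
    simp [this, Finset.sum_const, card_univ]
  have hdiag2 : ∑ x : Fin d × Fin d, T (x, (x.2, x.1)) = (d:ℂ)^2 := by
    have e : ∀ x : Fin d × Fin d, T (x, (x.2, x.1))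
        = ∑ j, (ψ j x.1 * (starRingEnd ℂ) (ψ j x.1)) * (ψ j x.2 * (starRingEnd ℂ) (ψ j x.2)) := by
      intro x; simp only [hT]; exact Finset.sum_congr rfl fun j _ => by ring
    rw [Finset.sum_congr rfl fun x _ => e x, Finset.sum_comm]
    have : ∀ j, ∑ x : Fin d × Fin d,
        (ψ j x.1 * (starRingEnd ℂ) (ψ j x.1)) * (ψ j x.2 * (starRingEnd ℂ) (ψ j x.2)) = 1 := by
      intro j
      rw [prod_sum_split (fun a => ψ j a * (starRingEnd ℂ) (ψ j a))
        (fun b => ψ j b * (starRingEnd ℂ) (ψ j b)), nrm, one_mul]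
    simp [this, Finset.sum_const, card_univ]
  -- contraction sums with P
  have hTP : ∑ q : (Fin d × Fin d) × (Fin d × Fin d), T q * P q = 2*(d:ℂ)^2 := by
    have e : ∀ q : (Fin d × Fin d) × (Fin d × Fin d), T q * P q
        = T q * (if q.1 = q.2 then 1 else 0) + T q * (if (q.1.2, q.1.1) = q.2 then 1 else 0) := by
      intro q
      simp only [hP]
      rw [mul_add, delta_pair q.1 q.2, delta_swap q.1 q.2]
    rw [Finset.sum_congr rfl fun q _ => e q, Finset.sum_add_distrib]
    have s1 : ∑ q : (Fin d × Fin d) × (Fin d × Fin d), T q * (if q.1 = q.2 then (1:ℂ) else 0)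
        = ∑ x : Fin d × Fin d, T (x, x) := by
      rw [Fintype.sum_prod_type]
      simp [mul_ite, mul_one, mul_zero, Finset.sum_ite_eq, Finset.sum_ite_eq']
    have s2 : ∑ q : (Fin d × Fin d) × (Fin d × Fin d), T q * (if (q.1.2, q.1.1) = q.2 then (1:ℂ) else 0)
        = ∑ x : Fin d × Fin d, T (x, (x.2, x.1)) := by
      rw [Fintype.sum_prod_type]
      simp [mul_ite, mul_one, mul_zero, Finset.sum_ite_eq, Finset.sum_ite_eq']
    rw [s1, s2, hdiag1, hdiag2]; ring
  have hPT : ∑ q : (Fin d × Fin d) × (Fin d × Fin d), P q * (starRingEnd ℂ) (T q) = 2*(d:ℂ)^2 := by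
    have : ∑ q : (Fin d × Fin d) × (Fin d × Fin d), P q * (starRingEnd ℂ) (T q)
        = (starRingEnd ℂ) (∑ q : (Fin d × Fin d) × (Fin d × Fin d), T q * P q) := by
      rw [map_sum]
      refine Finset.sum_congr rfl fun q _ => ?_
      rw [map_mul, hconjP]; ring
    rw [this, hTP, map_mul, map_pow, Complex.conj_natCast, map_ofNat]
  have hPP : ∑ q : (Fin d × Fin d) × (Fin d × Fin d), P q * P q = 2*(d:ℂ)^2 + 2*(d:ℂ) := by
    have e : ∀ q : (Fin d × Fin d) × (Fin d × Fin d), P q * P q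
        = (if q.1 = q.2 then 1 else 0) * (if q.1 = q.2 then 1 else 0)
          + 2 * ((if q.1 = q.2 then 1 else 0) * (if (q.1.2, q.1.1) = q.2 then 1 else 0))
          + (if (q.1.2, q.1.1) = q.2 then 1 else 0) * (if (q.1.2, q.1.1) = q.2 then 1 else 0) := by
      intro q
      simp only [hP]
      rw [← delta_pair q.1 q.2, ← delta_swap q.1 q.2]
      ring
    rw [Finset.sum_congr rfl fun q _ => e q, Finset.sum_add_distrib, Finset.sum_add_distrib]
    have s1 : ∑ q : (Fin d × Fin d) × (Fin d × Fin d),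
        (if q.1 = q.2 then (1:ℂ) else 0) * (if q.1 = q.2 then 1 else 0) = (d:ℂ)^2 := by
      rw [Fintype.sum_prod_type]
      simp [mul_ite, mul_one, mul_zero, Finset.sum_ite_eq, Finset.sum_ite_eq', Finset.sum_const,
        card_univ]
      ring
    have s2 : ∑ q : (Fin d × Fin d) × (Fin d × Fin d),
        2 * ((if q.1 = q.2 then (1:ℂ) else 0) * (if (q.1.2, q.1.1) = q.2 then 1 else 0)) = 2*(d:ℂ) := by
      rw [Fintype.sum_prod_type]
      have inner : ∀ x : Fin d × Fin d, ∑ y : Fin d × Fin d,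
          2 * ((if x = y then (1:ℂ) else 0) * (if (x.2, x.1) = y then 1 else 0))
          = if x.1 = x.2 then 2 else 0 := by
        intro x
        by_cases h : x.1 = x.2
        · have hx : (x.2, x.1) = x := by rw [← h]; exact Prod.ext rfl (by rw [h])
          simp only [hx, if_pos h]
          rw [Finset.sum_eq_single x]
          · simp
          · intro y _ hy; simp [Ne.symm hy, hy]
          · intro h'; exact absurd (mem_univ x) h'
        · rw [if_neg h]
          refine Finset.sum_eq_zero fun y _ => ?_
          by_cases h1 : x = y
          · have : ¬ ((x.2, x.1) = y) := by
              rw [← h1]; intro hcon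
              exact h (by rw [Prod.ext_iff] at hcon; exact hcon.2.symm ▸ hcon.1 ▸ rfl)
            simp [this]
          · simp [h1]
      rw [Finset.sum_congr rfl fun x _ => inner x]
      -- ∑ x : Fin d × Fin d, if x.1 = x.2 then 2 else 0 = 2d
      rw [Fintype.sum_prod_type]
      simp [Finset.sum_ite_eq, Finset.sum_ite_eq', Finset.sum_const, card_univ]
      ring
    have s3 : ∑ q : (Fin d × Fin d) × (Fin d × Fin d),
        (if (q.1.2, q.1.1) = q.2 then (1:ℂ) else 0) * (if (q.1.2, q.1.1) = q.2 then 1 else 0)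
        = (d:ℂ)^2 := by
      rw [Fintype.sum_prod_type]
      simp [mul_ite, mul_one, mul_zero, Finset.sum_ite_eq, Finset.sum_ite_eq', Finset.sum_const,
        card_univ]
      ring
    rw [s1, s2, s3]; ring
  -- the zero sum
  set F : (Fin d × Fin d) × (Fin d × Fin d) → ℂ := fun q => T q - c * P q with hF
  have key : ∑ q : (Fin d × Fin d) × (Fin d × Fin d), F q * (starRingEnd ℂ) (F q) = 0 := by
    have expand : ∀ q : (Fin d × Fin d) × (Fin d × Fin d),
        F q * (starRingEnd ℂ) (F q)
        = T q * (starRingEnd ℂ) (T q) - c * (T q * P q) - c * (P q * (starRingEnd ℂ) (T q))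
          + c * c * (P q * P q) := by
      intro q
      simp only [hF, map_sub, map_mul, hconjP, hconjc]
      have : (starRingEnd ℂ) (T q) * P q = P q * (starRingEnd ℂ) (T q) := by ring
      ring
    rw [Finset.sum_congr rfl fun q _ => expand q, Finset.sum_add_distrib,
      Finset.sum_sub_distrib, Finset.sum_sub_distrib, ← Finset.mul_sum, ← Finset.mul_sum,
      ← Finset.mul_sum, hA2, hTP, hPT, hPP, hc]
    field_simp
    ring
  intro q
  have := all_zero' key q
  rw [hF, sub_eq_zero] at this
  exact this

lemma moment4 (d : ℕ) (hd : 1 ≤ d) (ψ : Fin (d ^ 2) → (Fin d → ℂ))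
    (hψ : ∀ j, inp (ψ j) (ψ j) = 1)
    (hSIC : ∀ j k, j ≠ k → ‖inp (ψ j) (ψ k)‖ ^ 2 = 1 / (d + 1))
    (φ : Fin d → ℂ) (hφ : inp φ φ = 1) :
    ∑ j, (inp φ (ψ j) * (starRingEnd ℂ) (inp φ (ψ j)))^2 = 2*(d:ℂ)/((d:ℂ)+1) := by
  have hT := tensor_op d hd ψ hψ hSIC
  have e1 : ∀ j, (inp φ (ψ j) * (starRingEnd ℂ) (inp φ (ψ j)))^2
      = ∑ q : (Fin d × Fin d) × (Fin d × Fin d),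
        (((starRingEnd ℂ) (φ q.1.1) * ψ j q.1.1) * ((starRingEnd ℂ) (φ q.1.2) * ψ j q.1.2))
        * ((φ q.2.1 * (starRingEnd ℂ) (ψ j q.2.1)) * (φ q.2.2 * (starRingEnd ℂ) (ψ j q.2.2))) := by
    intro j
    rw [prod_sum_split
        (fun p : Fin d × Fin d => ((starRingEnd ℂ) (φ p.1) * ψ j p.1) * ((starRingEnd ℂ) (φ p.2) * ψ j p.2))
        (fun p : Fin d × Fin d => (φ p.1 * (starRingEnd ℂ) (ψ j p.1)) * (φ p.2 * (starRingEnd ℂ) (ψ j p.2))),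
      prod_sum_split (fun a => (starRingEnd ℂ) (φ a) * ψ j a) (fun b => (starRingEnd ℂ) (φ b) * ψ j b),
      prod_sum_split (fun a => φ a * (starRingEnd ℂ) (ψ j a)) (fun b => φ b * (starRingEnd ℂ) (ψ j b))]
    have w1 : (∑ a, (starRingEnd ℂ) (φ a) * ψ j a) = inp φ (ψ j) := rfl
    have w2 : (∑ b, φ b * (starRingEnd ℂ) (ψ j b)) = (starRingEnd ℂ) (inp φ (ψ j)) := by
      simp [inp, map_sum, map_mul]
    rw [w1, w2]; ring
  rw [Finset.sum_congr rfl fun j _ => e1 j, Finset.sum_comm]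
  have e2 : ∀ q : (Fin d × Fin d) × (Fin d × Fin d),
      (∑ j, (((starRingEnd ℂ) (φ q.1.1) * ψ j q.1.1) * ((starRingEnd ℂ) (φ q.1.2) * ψ j q.1.2))
        * ((φ q.2.1 * (starRingEnd ℂ) (ψ j q.2.1)) * (φ q.2.2 * (starRingEnd ℂ) (ψ j q.2.2))))
      = ((starRingEnd ℂ) (φ q.1.1) * (starRingEnd ℂ) (φ q.1.2) * φ q.2.1 * φ q.2.2)
        * (∑ j, (ψ j q.1.1 * ψ j q.1.2) * ((starRingEnd ℂ) (ψ j q.2.1) * (starRingEnd ℂ) (ψ j q.2.2))) := by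
    intro q
    rw [Finset.mul_sum]
    exact Finset.sum_congr rfl fun j _ => by ring
  rw [Finset.sum_congr rfl fun q _ => e2 q]
  rw [Finset.sum_congr rfl fun q _ => by rw [hT q]]
  have e3 : ∀ q : (Fin d × Fin d) × (Fin d × Fin d),
      ((starRingEnd ℂ) (φ q.1.1) * (starRingEnd ℂ) (φ q.1.2) * φ q.2.1 * φ q.2.2)
        * (((d:ℂ)/(d+1)) * ((if q.1.1 = q.2.1 then (1:ℂ) else 0) * (if q.1.2 = q.2.2 then 1 else 0)
          + (if q.1.1 = q.2.2 then 1 else 0) * (if q.1.2 = q.2.1 then 1 else 0)))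
      = ((d:ℂ)/(d+1)) *
          (((starRingEnd ℂ) (φ q.1.1) * (starRingEnd ℂ) (φ q.1.2) * φ q.2.1 * φ q.2.2)
            * (if q.1 = q.2 then 1 else 0)
          + ((starRingEnd ℂ) (φ q.1.1) * (starRingEnd ℂ) (φ q.1.2) * φ q.2.1 * φ q.2.2)
            * (if (q.1.2, q.1.1) = q.2 then 1 else 0)) := by
    intro q
    rw [← delta_pair q.1 q.2, ← delta_swap q.1 q.2]
    ring
  rw [Finset.sum_congr rfl fun q _ => e3 q, ← Finset.mul_sum, Finset.sum_add_distrib]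
  have s1 : ∑ q : (Fin d × Fin d) × (Fin d × Fin d),
      ((starRingEnd ℂ) (φ q.1.1) * (starRingEnd ℂ) (φ q.1.2) * φ q.2.1 * φ q.2.2)
        * (if q.1 = q.2 then (1:ℂ) else 0) = 1 := by
    rw [Fintype.sum_prod_type]
    simp only [mul_ite, mul_one, mul_zero, Finset.sum_ite_eq, Finset.sum_ite_eq', mem_univ, if_pos]
    have : ∀ x : Fin d × Fin d,
        (starRingEnd ℂ) (φ x.1) * (starRingEnd ℂ) (φ x.2) * φ x.1 * φ x.2
        = ((starRingEnd ℂ) (φ x.1) * φ x.1) * ((starRingEnd ℂ) (φ x.2) * φ x.2) := by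
      intro x; ring
    rw [Finset.sum_congr rfl fun x _ => this x,
      prod_sum_split (fun a => (starRingEnd ℂ) (φ a) * φ a) (fun b => (starRingEnd ℂ) (φ b) * φ b)]
    have : (∑ a, (starRingEnd ℂ) (φ a) * φ a) = 1 := hφ
    rw [this, one_mul]
  have s2 : ∑ q : (Fin d × Fin d) × (Fin d × Fin d),
      ((starRingEnd ℂ) (φ q.1.1) * (starRingEnd ℂ) (φ q.1.2) * φ q.2.1 * φ q.2.2)
        * (if (q.1.2, q.1.1) = q.2 then (1:ℂ) else 0) = 1 := by
    rw [Fintype.sum_prod_type]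
    simp only [mul_ite, mul_one, mul_zero, Finset.sum_ite_eq, Finset.sum_ite_eq', mem_univ, if_pos]
    have : ∀ x : Fin d × Fin d,
        (starRingEnd ℂ) (φ x.1) * (starRingEnd ℂ) (φ x.2) * φ x.2 * φ x.1
        = ((starRingEnd ℂ) (φ x.1) * φ x.1) * ((starRingEnd ℂ) (φ x.2) * φ x.2) := by
      intro x; ring
    rw [Finset.sum_congr rfl fun x _ => this x,
      prod_sum_split (fun a => (starRingEnd ℂ) (φ a) * φ a) (fun b => (starRingEnd ℂ) (φ b) * φ b)]
    have : (∑ a, (starRingEnd ℂ) (φ a) * φ a) = 1 := hφ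
    rw [this, one_mul]
  rw [s1, s2]
  ring

theorem stmt13 (d : ℕ) (hd : 1 ≤ d)
    (ψ : Fin (d ^ 2) → (Fin d → ℂ)) (hψ : ∀ j, inp (ψ j) (ψ j) = 1)
    (hSIC : ∀ j k, j ≠ k →
      ‖inp (ψ j) (ψ k)‖ ^ 2 = 1 / (d + 1))
    (φ : Fin d → ℂ) (hφ : inp φ φ = 1) :
    ∑ j, ‖inp φ (ψ j)‖ ^ 2 = d ∧
      ∑ j, ‖inp φ (ψ j)‖ ^ 4 = 2 * d / (d + 1) := by
  have conv1 : ∀ (z : ℂ), ((‖z‖ ^ 2 : ℝ) : ℂ) = z * (starRingEnd ℂ) z := by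
    intro z; rw [Complex.sq_norm, Complex.mul_conj]
  have conv2 : ∀ (z : ℂ), ((‖z‖ ^ 4 : ℝ) : ℂ) = (z * (starRingEnd ℂ) z) ^ 2 := by
    intro z
    have h4 : ‖z‖ ^ 4 = (‖z‖ ^ 2) ^ 2 := by ring
    rw [h4, Complex.ofReal_pow, conv1 z]
  constructor
  · have h := moment2 d hd ψ hψ hSIC φ hφ
    have key : ((∑ j, ‖inp φ (ψ j)‖ ^ 2 : ℝ) : ℂ) = ((d : ℝ) : ℂ) := by
      calc ((∑ j, ‖inp φ (ψ j)‖ ^ 2 : ℝ) : ℂ)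
          = ∑ j, ((‖inp φ (ψ j)‖ ^ 2 : ℝ) : ℂ) := by push_cast; rfl
        _ = ∑ j, inp φ (ψ j) * (starRingEnd ℂ) (inp φ (ψ j)) :=
            Finset.sum_congr rfl fun j _ => conv1 _
        _ = (d : ℂ) := h
        _ = ((d : ℝ) : ℂ) := by push_cast; rfl
    exact_mod_cast key
  · have h := moment4 d hd ψ hψ hSIC φ hφ
    have key : ((∑ j, ‖inp φ (ψ j)‖ ^ 4 : ℝ) : ℂ)
        = ((2 * d / (d + 1) : ℝ) : ℂ) := by
      calc ((∑ j, ‖inp φ (ψ j)‖ ^ 4 : ℝ) : ℂ)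
          = ∑ j, ((‖inp φ (ψ j)‖ ^ 4 : ℝ) : ℂ) := by push_cast; rfl
        _ = ∑ j, (inp φ (ψ j) * (starRingEnd ℂ) (inp φ (ψ j))) ^ 2 :=
            Finset.sum_congr rfl fun j _ => conv2 _
        _ = 2 * (d : ℂ) / ((d : ℂ) + 1) := h
        _ = ((2 * d / (d + 1) : ℝ) : ℂ) := by push_cast; rfl
    exact_mod_cast key
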